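/- For any subset E of the prequential space Π, the value of UpProb(E) is unchanged if in its definition the condition limsup_n V(π^n) ≥ 1 is replaced by sup_n V(π^n) ≥ 1. -/

import Mathlib

open Filter Topology MeasureTheory
open scoped ENNReal NNReal unitInterval

noncomputable section

/-- Finite prequential sequences: finite sequences of pairs (p, y) with p ∈ [0,1], y ∈ {0,1}. -/
abbrev PreqFin := List (unitInterval × Bool)

/-- The prequential space Π = ([0,1] × {0,1})^∞. -/
abbrev PreqInf := ℕ → unitInterval × Bool

/-- The length-n prefix π^n of π ∈ Π. -/
def prefixn (π : PreqInf) (n : ℕ) : PreqFin := List.ofFn fun i : Fin n => π i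

/-- A non-negative farthingale (values in [0,∞], with the convention 0·∞ = 0):
V(x) = (1-p)·V(x,p,0) + p·V(x,p,1). -/
def IsFarthingale (V : PreqFin → ℝ≥0∞) : Prop :=
  ∀ (x : PreqFin) (p : unitInterval),
    V x = ENNReal.ofReal (1 - (p : ℝ)) * V (x ++ [(p, false)])
        + ENNReal.ofReal (p : ℝ) * V (x ++ [(p, true)])

/-- Upper game-theoretic probability of a prequential event E ⊆ Π. -/
def UpProb (E : Set PreqInf) : ℝ≥0∞ :=
  sInf {a | ∃ V : PreqFin → ℝ≥0∞, IsFarthingale V ∧ V [] = a ∧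
    ∀ π ∈ E, 1 ≤ Filter.limsup (fun n => V (prefixn π n)) Filter.atTop}

/-- The variant of upper game-theoretic probability where `limsup` is replaced by `sup`. -/
def UpProbSup (E : Set PreqInf) : ℝ≥0∞ :=
  sInf {a | ∃ V : PreqFin → ℝ≥0∞, IsFarthingale V ∧ V [] = a ∧
    ∀ π ∈ E, 1 ≤ ⨆ n, V (prefixn π n)}

open Classical in
/-- The process `V` stopped at the first time it reaches level `c`. -/
noncomputable def stopV (V : PreqFin → ℝ≥0∞) (c : ℝ≥0∞) (x : PreqFin) : ℝ≥0∞ :=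
  if h : ∃ k, c ≤ V (x.take k) then V (x.take (Nat.find h)) else V x

lemma prefixn_take (π : PreqInf) {n m : ℕ} (h : n ≤ m) :
    (prefixn π m).take n = prefixn π n := by
  apply List.ext_getElem
  · simp [prefixn, Nat.min_eq_left h]
  · intro i h1 h2
    simp [prefixn, List.getElem_take]

lemma ofReal_add_ofReal (p : unitInterval) :
    ENNReal.ofReal (1 - (p : ℝ)) + ENNReal.ofReal (p : ℝ) = 1 := by
  rw [← ENNReal.ofReal_add (by linarith [p.2.2]) p.2.1]
  norm_num

open Classical in
lemma stopV_nil (V : PreqFin → ℝ≥0∞) (c : ℝ≥0∞) : stopV V c [] = V [] := by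
  unfold stopV
  split
  · simp
  · rfl

open Classical in
lemma isFarthingale_stopV {V : PreqFin → ℝ≥0∞} (hV : IsFarthingale V) (c : ℝ≥0∞) :
    IsFarthingale (stopV V c) := by
  intro x p
  by_cases h : ∃ k, c ≤ V (x.take k)
  · -- stopped already (or exactly now): value is frozen
    set k0 := Nat.find h with hk0
    have hk0le : k0 ≤ x.length := by
      by_contra hlt
      push_neg at hlt
      have := Nat.find_min h (m := x.length) hlt
      rw [List.take_length] at this
      exact this (by have hs := Nat.find_spec h; rw [← hk0, List.take_of_length_le (le_of_lt hlt)] at hs; exact hs)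
    have key : ∀ b : Bool, stopV V c (x ++ [(p, b)]) = V (x.take k0) := by
      intro b
      have htake : ∀ j ≤ x.length, (x ++ [(p, b)]).take j = x.take j := fun j hj =>
        List.take_append_of_le_length hj
      have hy : ∃ k, c ≤ V ((x ++ [(p, b)]).take k) :=
        ⟨k0, by rw [htake k0 hk0le]; exact Nat.find_spec h⟩
      have hfind : Nat.find hy = k0 := by
        rw [Nat.find_eq_iff]
        constructor
        · rw [htake k0 hk0le]; exact Nat.find_spec h
        · intro m hm
          rw [htake m (le_trans (le_of_lt hm) hk0le)]
          exact Nat.find_min h hm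
      rw [stopV, dif_pos hy, hfind, htake k0 hk0le]
    rw [stopV, dif_pos h, key false, key true, ← add_mul, ofReal_add_ofReal, one_mul]
  · -- not stopped: children values are the underlying process values
    have key : ∀ b : Bool, stopV V c (x ++ [(p, b)]) = V (x ++ [(p, b)]) := by
      intro b
      by_cases hy : ∃ k, c ≤ V ((x ++ [(p, b)]).take k)
      · rw [stopV, dif_pos hy]
        congr 1
        have hlen : (x ++ [(p, b)]).length ≤ Nat.find hy := by
          by_contra hlt
          push_neg at hlt
          have hle : Nat.find hy ≤ x.length := by
            have : Nat.find hy < x.length + 1 := by simpa using hlt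
            omega
          exact h ⟨Nat.find hy, by
            rw [← List.take_append_of_le_length hle]; exact Nat.find_spec hy⟩
        exact List.take_of_length_le hlen
      · rw [stopV, dif_neg hy]
    rw [stopV, dif_neg h, key false, key true]
    exact hV x p

open Classical in
lemma stopV_eventually_const {V : PreqFin → ℝ≥0∞} {c : ℝ≥0∞} {π : PreqInf}
    (h : ∃ n, c ≤ V (prefixn π n)) :
    ∃ v, c ≤ v ∧ ∀ m ≥ Nat.find h, stopV V c (prefixn π m) = v := by
  set k0 := Nat.find h with hk0
  refine ⟨V (prefixn π k0), Nat.find_spec h, fun m hm => ?_⟩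
  have hy : ∃ k, c ≤ V ((prefixn π m).take k) :=
    ⟨k0, by rw [prefixn_take π hm]; exact Nat.find_spec h⟩
  have hfind : Nat.find hy = k0 := by
    rw [Nat.find_eq_iff]
    constructor
    · rw [prefixn_take π hm]; exact Nat.find_spec h
    · intro j hj
      rw [prefixn_take π (le_trans (le_of_lt hj) hm)]
      exact Nat.find_min h hj
  rw [stopV, dif_pos hy, hfind, prefixn_take π hm]

/-- Replacing `limsup_n V(π^n) ≥ 1` by `sup_n V(π^n) ≥ 1` in the definition of upper
game-theoretic probability does not change its value. -/
theorem upProbSup_eq_upProb (E : Set PreqInf) : UpProbSup E = UpProb E := by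
  apply le_antisymm
  · -- easy: limsup ≤ sup
    apply sInf_le_sInf
    rintro a ⟨V, hV, hV0, hlim⟩
    exact ⟨V, hV, hV0, fun π hπ => le_trans (hlim π hπ) Filter.limsup_le_iSup⟩
  · -- hard direction
    apply le_sInf
    rintro a ⟨V, hV, hV0, hsup⟩
    apply ENNReal.le_of_forall_lt_one_mul_le
    intro c hc
    rcases eq_or_ne c 0 with rfl | hc0
    · simp
    have hcT : c ≠ ∞ := ne_top_of_lt (lt_of_lt_of_le hc le_top)
    rw [mul_comm]
    -- the scaled stopped process
    set W : PreqFin → ℝ≥0∞ := fun x => c⁻¹ * stopV V c x with hW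
    have hWf : IsFarthingale W := by
      intro x p
      rw [hW]
      simp only
      rw [isFarthingale_stopV hV c x p, mul_add]
      ring
    have hWlim : ∀ π ∈ E, 1 ≤ Filter.limsup (fun n => W (prefixn π n)) Filter.atTop := by
      intro π hπ
      have hex : ∃ n, c ≤ V (prefixn π n) := by
        have : c < ⨆ n, V (prefixn π n) := lt_of_lt_of_le hc (hsup π hπ)
        rcases lt_iSup_iff.mp this with ⟨n, hn⟩
        exact ⟨n, le_of_lt hn⟩
      obtain ⟨v, hcv, hconst⟩ := stopV_eventually_const hex
      have : Filter.limsup (fun n => W (prefixn π n)) Filter.atTop = c⁻¹ * v := by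
        rw [Filter.limsup_congr (f := Filter.atTop) (u := fun n => W (prefixn π n))
          (v := fun _ => c⁻¹ * v) ?_, Filter.limsup_const]
        filter_upwards [Filter.eventually_ge_atTop (Nat.find hex)] with m hm
        rw [hW]; simp only; rw [hconst m hm]
      rw [this]
      calc (1 : ℝ≥0∞) = c⁻¹ * c := (ENNReal.inv_mul_cancel hc0 hcT).symm
        _ ≤ c⁻¹ * v := mul_le_mul_right hcv _
    have hmem : c⁻¹ * a ∈ {b | ∃ V : PreqFin → ℝ≥0∞, IsFarthingale V ∧ V [] = b ∧
        ∀ π ∈ E, 1 ≤ Filter.limsup (fun n => V (prefixn π n)) Filter.atTop} :=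
      ⟨W, hWf, by rw [hW]; simp only; rw [stopV_nil, hV0], hWlim⟩
    calc UpProb E * c ≤ (c⁻¹ * a) * c := mul_le_mul_left (sInf_le hmem) c
      _ = a * (c⁻¹ * c) := by ring
      _ = a := by rw [ENNReal.inv_mul_cancel hc0 hcT, mul_one]
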